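/- Let K be a field of characteristic different from 2 and 3, and let E be the elliptic curve over K given by y² = (x − α)(x − β)(x − γ), where α, β, γ ∈ K are pairwise distinct. For a point P = (x₂, y₂) in E(K), there exists a point Q = (x₁, y₁) in E(K) with 2Q = P (doubling taken in the elliptic curve group law) if and only if all three elements x₂ − α, x₂ − β, and x₂ − γ are squares in K. -/

import Mathlib

open WeierstrassCurve.Affine (Point)

private lemma some_eq_some' {K : Type*} [Field K] {W : WeierstrassCurve.Affine K}
    {x₁ y₁ x₂ y₂ : K} (h₁ : W.Nonsingular x₁ y₁) (h₂ : W.Nonsingular x₂ y₂)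
    (hx : x₁ = x₂) (hy : y₁ = y₂) : Point.some _ _ h₁ = Point.some _ _ h₂ := by
  subst hx; subst hy; rfl

private lemma isSquare_helper {K : Type*} [Field K] (h2 : (2 : K) ≠ 0)
    (α β γ x₁ y₁ x₂ : K) (hy : y₁ ≠ 0)
    (heq : y₁ ^ 2 = (x₁ - α) * ((x₁ - β) * (x₁ - γ)))
    (hx : x₂ = ((3 * x₁ ^ 2 + 2 * (-(α + β + γ)) * x₁ + (α * β + α * γ + β * γ)) / (2 * y₁)) ^ 2
        + (α + β + γ) - 2 * x₁) :
    IsSquare (x₂ - α) := by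
  have hd : (2 * y₁) ≠ 0 := mul_ne_zero h2 hy
  have key : (x₂ - α) * (2 * y₁) ^ 2 = ((x₁ - α) ^ 2 - (α - β) * (α - γ)) ^ 2 := by
    rw [hx, div_pow]
    rw [div_add' _ _ _ (pow_ne_zero 2 hd), div_sub' (pow_ne_zero 2 hd),
      div_sub' (pow_ne_zero 2 hd), div_mul_cancel₀ _ (pow_ne_zero 2 hd)]
    linear_combination (4 * (β + γ - 2 * x₁)) * heq
  refine ⟨((x₁ - α) ^ 2 - (α - β) * (α - γ)) / (2 * y₁), ?_⟩
  rw [div_mul_div_comm, eq_div_iff (mul_ne_zero hd hd)]; linear_combination key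

open Classical in
set_option maxHeartbeats 1000000 in
theorem halving_criterion (K : Type*) [Field K] (h2 : (2 : K) ≠ 0) (h3 : (3 : K) ≠ 0)
    (α β γ : K) (hαβ : α ≠ β) (hαγ : α ≠ γ) (hβγ : β ≠ γ)
    (W : WeierstrassCurve.Affine K)
    (hW : W = { a₁ := 0, a₂ := -(α + β + γ), a₃ := 0,
                a₄ := α * β + α * γ + β * γ, a₆ := -(α * β * γ) })
    (x₂ y₂ : K) (h : W.Nonsingular x₂ y₂) :
    (∃ Q : W.Point, 2 • Q = WeierstrassCurve.Affine.Point.some _ _ h) ↔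
      (IsSquare (x₂ - α) ∧ IsSquare (x₂ - β) ∧ IsSquare (x₂ - γ)) := by
  have hΔ : W.Δ ≠ 0 := by
    have hval : W.Δ = 2 ^ 4 * ((α - β) * ((α - γ) * (β - γ))) ^ 2 := by
      rw [hW]
      simp only [WeierstrassCurve.Δ, WeierstrassCurve.b₂, WeierstrassCurve.b₄,
        WeierstrassCurve.b₆, WeierstrassCurve.b₈]
      ring
    rw [hval]
    exact mul_ne_zero (pow_ne_zero 4 h2) (pow_ne_zero 2 (mul_ne_zero
      (sub_ne_zero.mpr hαβ) (mul_ne_zero (sub_ne_zero.mpr hαγ) (sub_ne_zero.mpr hβγ))))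
  constructor
  · rintro ⟨Q, hQ⟩
    rw [two_nsmul] at hQ
    induction Q with
    | zero =>
      rw [show (Point.zero : W.Point) = 0 from rfl, add_zero] at hQ
      exact (Point.some_ne_zero h hQ.symm).elim
    | @some x₁ y₁ h₁ =>
      by_cases hy : y₁ = W.negY x₁ y₁
      · rw [WeierstrassCurve.Affine.Point.add_self_of_Y_eq hy] at hQ
        exact (Point.some_ne_zero h hQ.symm).elim
      · rw [WeierstrassCurve.Affine.Point.add_self_of_Y_ne hy] at hQ
        have hy0 : y₁ ≠ 0 := by
          intro h0
          apply hy
          rw [hW]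
          simp [WeierstrassCurve.Affine.negY, h0]
        injection hQ with hx hrest
        rw [WeierstrassCurve.Affine.slope_of_Y_ne rfl hy] at hx
        simp only [WeierstrassCurve.Affine.addX, WeierstrassCurve.Affine.negY, hW] at hx
        have heq : y₁ ^ 2 = (x₁ - α) * ((x₁ - β) * (x₁ - γ)) := by
          have hh := (W.equation_iff x₁ y₁).mp h₁.1
          rw [hW] at hh
          simp only at hh
          linear_combination hh
        have hx2 : x₂ = ((3 * x₁ ^ 2 + 2 * (-(α + β + γ)) * x₁ + (α * β + α * γ + β * γ))
            / (2 * y₁)) ^ 2 + (α + β + γ) - 2 * x₁ := by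
          rw [← hx]; ring_nf
        refine ⟨isSquare_helper h2 α β γ x₁ y₁ x₂ hy0 heq hx2,
          isSquare_helper h2 β α γ x₁ y₁ x₂ hy0 (by linear_combination heq)
            (by rw [hx2]; ring_nf),
          isSquare_helper h2 γ α β x₁ y₁ x₂ hy0 (by linear_combination heq)
            (by rw [hx2]; ring_nf)⟩
  · rintro ⟨⟨a, ha⟩, ⟨b, hb⟩, ⟨c, hc⟩⟩
    have key : ∀ a b c : K, x₂ - α = a * a → x₂ - β = b * b → x₂ - γ = c * c →
        a * b * c = y₂ → ∃ Q : W.Point, 2 • Q = Point.some _ _ h := by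
      clear ha hb hc a b c
      intro a b c ha hb hc habc
      have hav : α = x₂ - a * a := by linear_combination -ha
      have hbv : β = x₂ - b * b := by linear_combination -hb
      have hcv : γ = x₂ - c * c := by linear_combination -hc
      have hyv : y₂ = a * b * c := habc.symm
      subst hav; subst hbv; subst hcv; subst hyv
      have hab : a + b ≠ 0 := by
        intro h0; exact hαβ (by linear_combination (b - a) * h0)
      have hac : a + c ≠ 0 := by
        intro h0; exact hαγ (by linear_combination (c - a) * h0)
      have hbc : b + c ≠ 0 := by
        intro h0; exact hβγ (by linear_combination (c - b) * h0)
      set x₁ := x₂ + a * b + a * c + b * c with hx₁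
      set y₁ := (a + b) * ((a + c) * (b + c)) with hy₁
      have hy₁0 : y₁ ≠ 0 := mul_ne_zero hab (mul_ne_zero hac hbc)
      have hd : (2 * y₁) ≠ 0 := mul_ne_zero h2 hy₁0
      have hE : W.Equation x₁ y₁ := by
        rw [W.equation_iff x₁ y₁, hW]
        simp only
        rw [hx₁, hy₁]
        ring
      have hN := (W.equation_iff_nonsingular_of_Δ_ne_zero hΔ).mp hE
      refine ⟨Point.some _ _ hN, ?_⟩
      rw [two_nsmul]
      have hyne : y₁ ≠ W.negY x₁ y₁ := by
        intro h0
        rw [hW] at h0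
        simp only [WeierstrassCurve.Affine.negY] at h0
        have h2y : 2 * y₁ = 0 := by linear_combination h0
        exact hy₁0 ((mul_eq_zero.mp h2y).resolve_left h2)
      rw [WeierstrassCurve.Affine.Point.add_self_of_Y_ne hyne]
      have pa₁ : W.a₁ = 0 := by rw [hW]
      have pa₃ : W.a₃ = 0 := by rw [hW]
      have pa₂ : W.a₂ = -(x₂ - a * a + (x₂ - b * b) + (x₂ - c * c)) := by rw [hW]
      have pa₄ : W.a₄ = (x₂ - a * a) * (x₂ - b * b) + (x₂ - a * a) * (x₂ - c * c)
          + (x₂ - b * b) * (x₂ - c * c) := by rw [hW]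
      set L := W.slope x₁ x₁ y₁ y₁ with hLdef
      have e1 : L * (2 * y₁) = 3 * x₁ ^ 2
          + 2 * (-(x₂ - a * a + (x₂ - b * b) + (x₂ - c * c))) * x₁
          + ((x₂ - a * a) * (x₂ - b * b) + (x₂ - a * a) * (x₂ - c * c)
            + (x₂ - b * b) * (x₂ - c * c)) := by
        have hden : y₁ - W.negY x₁ y₁ = 2 * y₁ := by
          simp only [WeierstrassCurve.Affine.negY, pa₁, pa₃]; ring
        rw [hLdef, WeierstrassCurve.Affine.slope_of_Y_ne rfl hyne, hden, pa₁, pa₂, pa₄,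
          div_mul_cancel₀ _ hd]
        ring
      rw [hx₁, hy₁] at e1
      have hX : W.addX x₁ x₁ L = x₂ := by
        simp only [WeierstrassCurve.Affine.addX, pa₁, pa₂]
        apply mul_right_cancel₀ (b := (2 * y₁) ^ 2) (pow_ne_zero 2 hd)
        rw [hx₁, hy₁]
        linear_combination (L * (2 * ((a + b) * ((a + c) * (b + c))))
          + (3 * (x₂ + a * b + a * c + b * c) ^ 2
            + 2 * (-(x₂ - a * a + (x₂ - b * b) + (x₂ - c * c))) * (x₂ + a * b + a * c + b * c)
            + ((x₂ - a * a) * (x₂ - b * b) + (x₂ - a * a) * (x₂ - c * c)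
              + (x₂ - b * b) * (x₂ - c * c)))) * e1
      refine some_eq_some' _ _ hX ?_
      simp only [WeierstrassCurve.Affine.addY, WeierstrassCurve.Affine.negAddY]
      rw [hX]
      simp only [WeierstrassCurve.Affine.negY, pa₁, pa₃]
      apply mul_right_cancel₀ (b := 2 * y₁) hd
      rw [hx₁, hy₁]
      linear_combination (a * b + a * c + b * c) * e1
    have hy22 : (y₂ - a * b * c) * (y₂ + a * b * c) = 0 := by
      have hh := (W.equation_iff x₂ y₂).mp h.1
      rw [hW] at hh
      simp only at hh
      linear_combination hh + (x₂ - α) * (x₂ - β) * hc + (x₂ - α) * (c * c) * hb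
        + (b * b) * (c * c) * ha
    rcases mul_eq_zero.mp hy22 with h' | h'
    · exact key a b c ha hb hc (by linear_combination -h')
    · exact key (-a) b c (by linear_combination ha) hb hc (by linear_combination -h')
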